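/- arXiv:2303.09538 — 2 statements merged into one kernel-verified Lean document; each statement's English description precedes it below -/
import Mathlib

section
/- Let A and B be Hermitian n×n complex matrices with A² = I, B² = I, and AB + BA = 0. Then for all real α, β, γ there exist real a, b, c such that exp(iαA)·exp(iβB)·exp(iγA) = exp(iaB)·exp(ibA)·exp(icB). -/
noncomputable section
set_option maxHeartbeats 1000000

open Complex

private theorem exp_smul_invol {n : ℕ} (A : Matrix (Fin n) (Fin n) ℂ) (hA : A * A = 1) (t : ℝ) :
    NormedSpace.exp ((Complex.I * t) • A) =
      ((Real.cos t : ℂ)) • (1 : Matrix (Fin n) (Fin n) ℂ) + (Complex.I * Real.sin t) • A := by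
  rw [NormedSpace.exp_eq_tsum (𝕂 := ℂ)]
  refine HasSum.tsum_eq ?_
  have hA2 : A ^ 2 = 1 := by rw [sq, hA]
  have key : ∀ m : ℕ, ((m.factorial : ℂ))⁻¹ • ((Complex.I * t) • A) ^ m
      = ((Complex.I * t) ^ m / (m.factorial)) • A ^ m := by
    intro m
    rw [smul_pow, smul_smul, div_eq_inv_mul]
  have ht : ∀ k : ℕ, (Complex.I * (t:ℂ)) ^ (2*k) = (-1 : ℂ) ^ k * (t:ℂ) ^ (2*k) := by
    intro k
    rw [pow_mul, mul_pow, Complex.I_sq, neg_one_mul, neg_pow, ← pow_mul]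
  have heven : HasSum (fun k : ℕ => (((2*k).factorial : ℂ))⁻¹ • ((Complex.I * t) • A) ^ (2*k))
      (((Real.cos t : ℂ)) • (1 : Matrix (Fin n) (Fin n) ℂ)) := by
    have hc : HasSum (fun k : ℕ => ((-1 : ℂ) ^ k * (t:ℂ) ^ (2*k) / ((2*k).factorial : ℂ)))
        (Complex.cos t) := Complex.hasSum_cos t
    have := hc.smul_const (1 : Matrix (Fin n) (Fin n) ℂ)
    rw [← Complex.ofReal_cos] at this
    convert this using 2 with k
    rw [key, show A ^ (2*k) = 1 by rw [pow_mul, hA2, one_pow]]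
    congr 1
    rw [ht]
  have hodd : HasSum (fun k : ℕ => (((2*k+1).factorial : ℂ))⁻¹ • ((Complex.I * t) • A) ^ (2*k+1))
      ((Complex.I * Real.sin t) • A) := by
    have hs : HasSum (fun k : ℕ => ((-1 : ℂ) ^ k * (t:ℂ) ^ (2*k+1) / ((2*k+1).factorial : ℂ)))
        (Complex.sin t) := Complex.hasSum_sin t
    have := (hs.mul_left Complex.I).smul_const A
    rw [← Complex.ofReal_sin] at this
    convert this using 2 with k
    rw [key, show A ^ (2*k+1) = A by rw [pow_succ, pow_mul, hA2, one_pow, one_mul]]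
    congr 1
    rw [pow_succ, ht]
    ring
  exact heven.even_add_odd hodd

private theorem expand3 {n : ℕ} (X Y : Matrix (Fin n) (Fin n) ℂ)
    (hX : X * X = 1) (hYX : Y * X = -(X * Y)) (p1 q1 p2 q2 p3 q3 : ℂ) :
    (p1 • (1 : Matrix (Fin n) (Fin n) ℂ) + q1 • X) * (p2 • 1 + q2 • Y) * (p3 • 1 + q3 • X)
      = (p1*p2*p3 + q1*p2*q3) • 1 + (q1*p2*p3 + p1*p2*q3) • X
        + (p1*q2*p3 - q1*q2*q3) • Y + (q1*q2*p3 - p1*q2*q3) • (X*Y) := by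
  have hXYX : X * Y * X = -Y := by
    rw [mul_assoc, hYX, mul_neg, ← mul_assoc, hX, one_mul]
  simp only [add_mul, mul_add, smul_mul_assoc, mul_smul_comm, smul_smul, one_mul, mul_one,
    hX, hYX, hXYX, smul_neg]
  module

private theorem exists_cos_sin (u v r : ℝ) (hr : 0 ≤ r) (h : u^2 + v^2 = r^2) :
    ∃ θ : ℝ, r * Real.cos θ = u ∧ r * Real.sin θ = v := by
  rcases eq_or_lt_of_le hr with hr0 | hrpos
  · subst hr0
    have hu : u = 0 := by nlinarith [sq_nonneg u, sq_nonneg v]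
    have hv : v = 0 := by nlinarith [sq_nonneg u, sq_nonneg v]
    exact ⟨0, by simp [hu], by simp [hv]⟩
  · set z : ℂ := ⟨u, v⟩ with hz
    have habs : ‖z‖ = r := by
      have h1 : ‖z‖ ^ 2 = r ^ 2 := by
        rw [Complex.sq_norm, Complex.normSq_mk]; nlinarith
      nlinarith [norm_nonneg z]
    have hz0 : z ≠ 0 := by
      intro h0
      rw [h0, norm_zero] at habs
      exact absurd habs.symm (ne_of_gt hrpos)
    refine ⟨Complex.arg z, ?_, ?_⟩
    · rw [Complex.cos_arg hz0, habs]
      field_simp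
      rfl
    · rw [Complex.sin_arg, habs]
      field_simp
      rfl

theorem turnover_of_anticommuting_involutions {n : ℕ}
    (A B : Matrix (Fin n) (Fin n) ℂ)
    (hAh : A.IsHermitian) (hBh : B.IsHermitian)
    (hA : A * A = 1) (hB : B * B = 1) (hAB : A * B + B * A = 0)
    (α β γ : ℝ) :
    ∃ a b c : ℝ,
      NormedSpace.exp ((Complex.I * α) • A) *
          NormedSpace.exp ((Complex.I * β) • B) *
            NormedSpace.exp ((Complex.I * γ) • A) =
        NormedSpace.exp ((Complex.I * a) • B) *
            NormedSpace.exp ((Complex.I * b) • A) *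
              NormedSpace.exp ((Complex.I * c) • B) := by
  have hBA : B * A = -(A * B) := eq_neg_of_add_eq_zero_right hAB
  have hAB' : A * B = -(B * A) := eq_neg_of_add_eq_zero_left hAB
  -- the target quaternion coordinates
  set w : ℝ := Real.cos β * Real.cos (α + γ) with hw
  set y : ℝ := Real.sin β * Real.cos (α - γ) with hy
  set x : ℝ := Real.cos β * Real.sin (α + γ) with hx
  set z : ℝ := -(Real.sin β * Real.sin (α - γ)) with hz
  have hsum : (x^2 + z^2) + (w^2 + y^2) = 1 := by
    have h1 := Real.sin_sq_add_cos_sq β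
    have h2 := Real.sin_sq_add_cos_sq (α + γ)
    have h3 := Real.sin_sq_add_cos_sq (α - γ)
    rw [hw, hy, hx, hz]; nlinarith
  set r1 : ℝ := Real.sqrt (w^2 + y^2) with hr1
  set r2 : ℝ := Real.sqrt (x^2 + z^2) with hr2
  have hr1sq : r1^2 = w^2 + y^2 := Real.sq_sqrt (by positivity)
  have hr2sq : r2^2 = x^2 + z^2 := Real.sq_sqrt (by positivity)
  have hr1n : 0 ≤ r1 := Real.sqrt_nonneg _
  have hr2n : 0 ≤ r2 := Real.sqrt_nonneg _
  set b : ℝ := Real.arcsin r2 with hbdef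
  have hsinb : Real.sin b = r2 := by
    refine Real.sin_arcsin (by linarith) ?_
    nlinarith
  have hcosb : Real.cos b = r1 := by
    rw [hbdef, Real.cos_arcsin]
    rw [show 1 - r2^2 = w^2 + y^2 by nlinarith]
  obtain ⟨t, ht1, ht2⟩ := exists_cos_sin w y r1 hr1n hr1sq.symm
  obtain ⟨u, hu1, hu2⟩ := exists_cos_sin x z r2 hr2n hr2sq.symm
  set a : ℝ := (t + u)/2 with hadef
  set c : ℝ := (t - u)/2 with hcdef
  refine ⟨a, b, c, ?_⟩
  have hac : a + c = t := by rw [hadef, hcdef]; ring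
  have hamc : a - c = u := by rw [hadef, hcdef]; ring
  -- the four real coefficient identities
  have eb1 : Real.cos b * Real.cos (a + c) = w := by rw [hac, hcosb]; exact ht1
  have eb2 : Real.cos b * Real.sin (a + c) = y := by rw [hac, hcosb]; exact ht2
  have eb3 : Real.sin b * Real.cos (a - c) = x := by rw [hamc, hsinb]; exact hu1
  have eb4 : Real.sin b * Real.sin (a - c) = z := by rw [hamc, hsinb]; exact hu2
  have R1 : Real.cos α * Real.cos β * Real.cos γ - Real.sin α * Real.cos β * Real.sin γ
      = Real.cos a * Real.cos b * Real.cos c - Real.sin a * Real.cos b * Real.sin c := by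
    rw [hw, Real.cos_add] at eb1
    rw [Real.cos_add] at eb1
    linear_combination -eb1
  have R2 : Real.sin α * Real.cos β * Real.cos γ + Real.cos α * Real.cos β * Real.sin γ
      = Real.cos a * Real.sin b * Real.cos c + Real.sin a * Real.sin b * Real.sin c := by
    rw [hx, Real.sin_add] at eb3
    rw [Real.cos_sub] at eb3
    linear_combination -eb3
  have R3 : Real.cos α * Real.sin β * Real.cos γ + Real.sin α * Real.sin β * Real.sin γ
      = Real.sin a * Real.cos b * Real.cos c + Real.cos a * Real.cos b * Real.sin c := by
    rw [hy, Real.cos_sub] at eb2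
    rw [Real.sin_add] at eb2
    linear_combination -eb2
  have R4 : Real.sin α * Real.sin β * Real.cos γ - Real.cos α * Real.sin β * Real.sin γ
      = Real.cos a * Real.sin b * Real.sin c - Real.sin a * Real.sin b * Real.cos c := by
    rw [hz, Real.sin_sub] at eb4
    rw [Real.sin_sub] at eb4
    linear_combination eb4
  have CR1 := congrArg (Complex.ofReal) R1
  have CR2 := congrArg (Complex.ofReal) R2
  have CR3 := congrArg (Complex.ofReal) R3
  have CR4 := congrArg (Complex.ofReal) R4
  push_cast at CR1 CR2 CR3 CR4
  rw [exp_smul_invol A hA α, exp_smul_invol B hB β, exp_smul_invol A hA γ,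
    exp_smul_invol B hB a, exp_smul_invol A hA b, exp_smul_invol B hB c]
  rw [expand3 A B hA hBA, expand3 B A hB hAB']
  rw [hBA]
  have hI2 : (Complex.I) ^ 2 = -1 := Complex.I_sq
  match_scalars
  · push_cast
    linear_combination CR1 + (Complex.sin ↑α * Complex.cos ↑β * Complex.sin ↑γ
      - Complex.sin ↑a * Complex.cos ↑b * Complex.sin ↑c) * hI2
  · push_cast
    linear_combination Complex.I * CR2
      + (Complex.I * Complex.sin ↑a * Complex.sin ↑b * Complex.sin ↑c) * hI2
  · push_cast
    linear_combination Complex.I * CR3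
      - (Complex.I * Complex.sin ↑α * Complex.sin ↑β * Complex.sin ↑γ) * hI2
  · push_cast
    linear_combination (Complex.I ^ 2) * CR4
end
end

section
/- The 8×8 matrices A := Z⊗Z⊗I and B := I⊗X⊗X are Hermitian involutions (A² = B² = I₈) that anticommute: AB + BA = 0. Consequently, for all real α, β, γ there exist real a, b, c with exp(iαA)·exp(iβB)·exp(iγA) = exp(iaB)·exp(ibA)·exp(icB). -/
open Matrix Kronecker

noncomputable section

def PX : Matrix (Fin 2) (Fin 2) ℂ := !![0, 1; 1, 0]
def PY : Matrix (Fin 2) (Fin 2) ℂ := !![0, -Complex.I; Complex.I, 0]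
def PZ : Matrix (Fin 2) (Fin 2) ℂ := !![1, 0; 0, -1]

/-- Kronecker product of two 2×2 matrices, reindexed as a 4×4 matrix
(first factor most significant). -/
def kron4 (A B : Matrix (Fin 2) (Fin 2) ℂ) : Matrix (Fin 4) (Fin 4) ℂ :=
  Matrix.reindex finProdFinEquiv finProdFinEquiv (A ⊗ₖ B)

/-- Kronecker product of three 2×2 matrices, reindexed as an 8×8 matrix
(first factor most significant). -/
def kron8 (A B C : Matrix (Fin 2) (Fin 2) ℂ) : Matrix (Fin 8) (Fin 8) ℂ :=
  Matrix.reindex finProdFinEquiv finProdFinEquiv (A ⊗ₖ kron4 B C)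

/-! ### Auxiliary lemmas -/

lemma exp_involution {N : Type*} [Fintype N] [DecidableEq N]
    (A : Matrix N N ℂ) (hA : A * A = 1) (t : ℝ) :
    NormedSpace.exp ((Complex.I * t) • A)
      = (Real.cos t : ℂ) • (1 : Matrix N N ℂ) + (Complex.I * Real.sin t) • A := by
  letI : SeminormedRing (Matrix N N ℂ) := Matrix.linftyOpSemiNormedRing
  letI : NormedRing (Matrix N N ℂ) := Matrix.linftyOpNormedRing
  letI : NormedAlgebra ℂ (Matrix N N ℂ) := Matrix.linftyOpNormedAlgebra
  rw [NormedSpace.exp_eq_tsum ℂ]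
  refine HasSum.tsum_eq ?_
  have hA2 : A ^ 2 = 1 := by rw [pow_two, hA]
  have hc := ((Complex.hasSum_cos (t : ℂ)).smul_const (1 : Matrix N N ℂ))
  have hs := (((Complex.hasSum_sin (t : ℂ)).mul_left Complex.I).smul_const A)
  rw [show Complex.cos (t : ℂ) = ((Real.cos t : ℝ) : ℂ) by rw [Complex.ofReal_cos]] at hc
  rw [show Complex.I * Complex.sin (t : ℂ) = Complex.I * (Real.sin t : ℝ) by
    rw [Complex.ofReal_sin]] at hs
  refine HasSum.even_add_odd ?_ ?_
  · convert hc using 2 with k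
    case e'_3 => rfl
    rw [smul_pow, pow_mul A, hA2, one_pow, smul_smul]
    congr 1
    rw [mul_pow, pow_mul, Complex.I_sq]
    ring
  · convert hs using 2 with k
    case e'_3 => rfl
    rw [smul_pow, show A ^ (2 * k + 1) = A by rw [pow_succ, pow_mul A, hA2, one_pow, one_mul],
      smul_smul]
    congr 1
    rw [mul_pow, pow_succ Complex.I, pow_mul, Complex.I_sq]
    ring

lemma kron4_mul (A B C D : Matrix (Fin 2) (Fin 2) ℂ) :
    kron4 A B * kron4 C D = kron4 (A * C) (B * D) := by
  simp only [kron4, reindex_apply]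
  rw [submatrix_mul_equiv, ← mul_kronecker_mul]

lemma kron8_mul (A B C D E F : Matrix (Fin 2) (Fin 2) ℂ) :
    kron8 A B C * kron8 D E F = kron8 (A * D) (B * E) (C * F) := by
  simp only [kron8, reindex_apply]
  rw [submatrix_mul_equiv, ← mul_kronecker_mul, kron4_mul]

lemma kron4_one : kron4 1 1 = 1 := by
  simp [kron4, one_kronecker_one, reindex_apply, submatrix_one_equiv]

lemma kron8_one : kron8 1 1 1 = 1 := by
  simp only [kron8, kron4_one, one_kronecker_one, reindex_apply, submatrix_one_equiv]

lemma kronCT {l m : Type*} [Fintype l] [Fintype m] (M : Matrix l l ℂ) (N : Matrix m m ℂ) :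
    (M ⊗ₖ N)ᴴ = Mᴴ ⊗ₖ Nᴴ := by
  ext i j
  simp [conjTranspose_apply, kroneckerMap_apply, star_mul', mul_comm]

lemma kron4_conjTranspose (A B : Matrix (Fin 2) (Fin 2) ℂ) :
    (kron4 A B)ᴴ = kron4 Aᴴ Bᴴ := by
  simp only [kron4, conjTranspose_reindex, kronCT]

lemma kron8_conjTranspose (A B C : Matrix (Fin 2) (Fin 2) ℂ) :
    (kron8 A B C)ᴴ = kron8 Aᴴ Bᴴ Cᴴ := by
  simp only [kron8, conjTranspose_reindex, kronCT, kron4_conjTranspose]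

lemma PZ_mul_PZ : PZ * PZ = 1 := by
  ext i j
  fin_cases i <;> fin_cases j <;> simp [PZ, mul_apply, Fin.sum_univ_two]

lemma PX_mul_PX : PX * PX = 1 := by
  ext i j
  fin_cases i <;> fin_cases j <;> simp [PX, mul_apply, Fin.sum_univ_two]

lemma PZPX_anti : PZ * PX + PX * PZ = 0 := by
  ext i j
  fin_cases i <;> fin_cases j <;> simp [PZ, PX, mul_apply, Fin.sum_univ_two]

lemma PZ_herm : PZᴴ = PZ := by
  ext i j
  fin_cases i <;> fin_cases j <;> simp [PZ, conjTranspose_apply]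

lemma PX_herm : PXᴴ = PX := by
  ext i j
  fin_cases i <;> fin_cases j <;> simp [PX, conjTranspose_apply]

lemma kron8_add_middle (A B B' C : Matrix (Fin 2) (Fin 2) ℂ) :
    kron8 A B C + kron8 A B' C = kron8 A (B + B') C := by
  ext i j
  simp [kron8, kron4, kroneckerMap_apply, submatrix_apply, Matrix.add_apply]
  ring

abbrev M8 := Matrix (Fin 8) (Fin 8) ℂ

lemma triple (A B : M8) (hA : A * A = 1) (_hB : B * B = 1) (hAB : A * B = -(B * A))
    (α β γ : ℝ) :
    ((Real.cos α : ℂ) • (1 : M8) + (Complex.I * Real.sin α) • A) *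
        ((Real.cos β : ℂ) • (1 : M8) + (Complex.I * Real.sin β) • B) *
          ((Real.cos γ : ℂ) • (1 : M8) + (Complex.I * Real.sin γ) • A) =
      ((Real.cos β * Real.cos (α + γ) : ℝ) : ℂ) • (1 : M8)
        + (Complex.I * (Real.cos β * Real.sin (α + γ) : ℝ)) • A
        + (Complex.I * (Real.sin β * Real.cos (γ - α) : ℝ)) • B
        + ((-(Real.sin β * Real.sin (γ - α)) : ℝ) : ℂ) • (B * A) := by
  have h1 : A * (B * A) = -B := by
    rw [← mul_assoc, hAB, neg_mul, mul_assoc, hA, mul_one]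
  simp only [mul_add, add_mul, smul_mul_assoc, mul_smul_comm, mul_one, one_mul, mul_assoc,
    hA, hAB, h1, smul_neg, neg_mul, mul_neg, neg_neg]
  match_scalars
  · push_cast [Complex.ofReal_cos, Complex.ofReal_sin, Complex.cos_add, Complex.sin_add]
    linear_combination (Complex.sin ↑α * Complex.cos ↑β * Complex.sin ↑γ) * Complex.I_sq
  · push_cast [Complex.ofReal_cos, Complex.ofReal_sin, Complex.cos_add, Complex.sin_add]
    ring
  · push_cast [Complex.ofReal_cos, Complex.ofReal_sin, Complex.cos_sub, Complex.sin_sub]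
    linear_combination (-(Complex.I * Complex.sin ↑α * Complex.sin ↑β * Complex.sin ↑γ)) *
      Complex.I_sq
  · push_cast [Complex.ofReal_cos, Complex.ofReal_sin, Complex.cos_sub, Complex.sin_sub]
    linear_combination ((Complex.cos ↑α * Complex.sin ↑β * Complex.sin ↑γ
      - Complex.sin ↑α * Complex.sin ↑β * Complex.cos ↑γ)) * Complex.I_sq

lemma arg_spec (p q : ℝ) :
    Real.sqrt (p ^ 2 + q ^ 2) * Real.cos (Complex.arg ⟨p, q⟩) = p ∧
      Real.sqrt (p ^ 2 + q ^ 2) * Real.sin (Complex.arg ⟨p, q⟩) = q := by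
  by_cases h : (⟨p, q⟩ : ℂ) = 0
  · have hp : p = 0 := congrArg Complex.re h
    have hq : q = 0 := congrArg Complex.im h
    simp [hp, hq]
  · have habs : ‖(⟨p, q⟩ : ℂ)‖ = Real.sqrt (p ^ 2 + q ^ 2) := by
      rw [Complex.norm_def, Complex.normSq_mk]
      ring_nf
    have hne : Real.sqrt (p ^ 2 + q ^ 2) ≠ 0 := by
      rw [← habs]; exact norm_ne_zero_iff.mpr h
    constructor
    · rw [Complex.cos_arg h, habs]
      field_simp
    · rw [Complex.sin_arg, habs]
      field_simp

lemma euler_angles (α β γ : ℝ) :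
    ∃ a b c : ℝ,
      Real.cos b * Real.cos (a + c) = Real.cos β * Real.cos (α + γ) ∧
      Real.sin b * Real.cos (c - a) = Real.cos β * Real.sin (α + γ) ∧
      Real.cos b * Real.sin (a + c) = Real.sin β * Real.cos (γ - α) ∧
      Real.sin b * Real.sin (c - a) = -(Real.sin β * Real.sin (γ - α)) := by
  set w := Real.cos β * Real.cos (α + γ) with hw
  set x := Real.cos β * Real.sin (α + γ) with hx
  set y := Real.sin β * Real.cos (γ - α) with hy
  set z := Real.sin β * Real.sin (γ - α) with hz
  have hsum : w ^ 2 + x ^ 2 + y ^ 2 + z ^ 2 = 1 := by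
    rw [hw, hx, hy, hz]
    nlinarith [Real.sin_sq_add_cos_sq β, Real.sin_sq_add_cos_sq (α + γ),
      Real.sin_sq_add_cos_sq (γ - α)]
  set r2 := Real.sqrt (x ^ 2 + z ^ 2) with hr2
  set u := Complex.arg ⟨w, y⟩ with hu
  set v := Complex.arg ⟨x, -z⟩ with hv
  have hle1 : r2 ≤ 1 := Real.sqrt_le_one.mpr (by nlinarith [sq_nonneg w, sq_nonneg y])
  have hs : Real.sin (Real.arcsin r2) = r2 :=
    Real.sin_arcsin ((by norm_num : (-1:ℝ) ≤ 0).trans (Real.sqrt_nonneg _)) hle1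
  have hc : Real.cos (Real.arcsin r2) = Real.sqrt (w ^ 2 + y ^ 2) := by
    rw [Real.cos_arcsin]
    congr 1
    rw [hr2, Real.sq_sqrt (by positivity)]
    linarith [hsum]
  have hxz : Real.sqrt (x ^ 2 + (-z) ^ 2) = r2 := by rw [hr2, neg_sq]
  have e1 : (u - v) / 2 + (u + v) / 2 = u := by ring
  have e2 : (u + v) / 2 - (u - v) / 2 = v := by ring
  refine ⟨(u - v) / 2, Real.arcsin r2, (u + v) / 2, ?_, ?_, ?_, ?_⟩
  · rw [e1, hc]; exact (arg_spec w y).1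
  · rw [e2, hs, ← hxz]; exact (arg_spec x (-z)).1
  · rw [e1, hc]; exact (arg_spec w y).2
  · rw [e2, hs, ← hxz]; exact (arg_spec x (-z)).2

/-! ### Main theorem -/

theorem mixed_turnover_ZZI_IXX :
    letI A : Matrix (Fin 8) (Fin 8) ℂ := kron8 PZ PZ 1
    letI B : Matrix (Fin 8) (Fin 8) ℂ := kron8 1 PX PX
    A.IsHermitian ∧ B.IsHermitian ∧ A * A = 1 ∧ B * B = 1 ∧ A * B + B * A = 0 ∧
      ∀ α β γ : ℝ, ∃ a b c : ℝ,
        NormedSpace.exp ((Complex.I * α) • A) *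
            NormedSpace.exp ((Complex.I * β) • B) *
              NormedSpace.exp ((Complex.I * γ) • A) =
          NormedSpace.exp ((Complex.I * a) • B) *
              NormedSpace.exp ((Complex.I * b) • A) *
                NormedSpace.exp ((Complex.I * c) • B) := by
  have hAH : (kron8 PZ PZ 1).IsHermitian := by
    show (kron8 PZ PZ 1)ᴴ = kron8 PZ PZ 1
    rw [kron8_conjTranspose, PZ_herm, conjTranspose_one]
  have hBH : (kron8 1 PX PX).IsHermitian := by
    show (kron8 1 PX PX)ᴴ = kron8 1 PX PX
    rw [kron8_conjTranspose, PX_herm, conjTranspose_one]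
  have hA : kron8 PZ PZ 1 * kron8 PZ PZ 1 = 1 := by
    rw [kron8_mul, PZ_mul_PZ, one_mul, kron8_one]
  have hB : kron8 1 PX PX * kron8 1 PX PX = 1 := by
    rw [kron8_mul, PX_mul_PX, one_mul, kron8_one]
  have hanti : kron8 PZ PZ 1 * kron8 1 PX PX + kron8 1 PX PX * kron8 PZ PZ 1 = 0 := by
    rw [kron8_mul, kron8_mul, mul_one, one_mul, one_mul, mul_one, kron8_add_middle, PZPX_anti]
    simp [kron8, kron4]
  refine ⟨hAH, hBH, hA, hB, hanti, ?_⟩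
  intro α β γ
  have hAB : kron8 PZ PZ 1 * kron8 1 PX PX = -(kron8 1 PX PX * kron8 PZ PZ 1) :=
    eq_neg_of_add_eq_zero_left hanti
  have hBA : kron8 1 PX PX * kron8 PZ PZ 1 = -(kron8 PZ PZ 1 * kron8 1 PX PX) :=
    eq_neg_of_add_eq_zero_left (by rw [add_comm]; exact hanti)
  obtain ⟨a, b, c, G1, G2, G3, G4⟩ := euler_angles α β γ
  refine ⟨a, b, c, ?_⟩
  rw [exp_involution _ hA α, exp_involution _ hB β, exp_involution _ hA γ,
    exp_involution _ hB a, exp_involution _ hA b, exp_involution _ hB c,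
    triple _ _ hA hB hAB α β γ, triple _ _ hB hA hBA a b c, hAB, smul_neg]
  have G1c := congrArg (Complex.ofReal) G1
  have G2c := congrArg (Complex.ofReal) G2
  have G3c := congrArg (Complex.ofReal) G3
  have G4c := congrArg (Complex.ofReal) G4
  push_cast at G1c G2c G3c G4c
  match_scalars
  · linear_combination -G1c
  · linear_combination -Complex.I * G2c
  · linear_combination -Complex.I * G3c
  · linear_combination -G4c
end
end
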